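/- (Example 4.9, K-theory, ring presentation) The ring P_K(α) of integral piecewise Laurent polynomials on Σ_{(1,1,2)} is generated as a ring by the global elements α_1^{±1}, α_2^{±1} (embedded diagonally) together with ε = (0, 1−α_1², 1−α_2) and ζ = (0, (1−α_1)(α_2−α_1²), 0); precisely, the algebra homomorphism from the polynomial ring S^±_ℤ(α_1,α_2)[E,Z] to P_K(α) sending E ↦ ε and Z ↦ ζ (and α_i to their diagonal images) is surjective with kernel the ideal I_2 = ( E(E + α_2 − 1) − (1+α_1)Z, Z(E + α_1² − 1), Z(Z − (1−α_1)(α_2 − α_1²)) ), so P_K(α) ≅ S^±_ℤ(α_1,α_2)[E,Z]/I_2. -/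

import Mathlib

noncomputable section

/-- The Laurent polynomial ring `S^±_ℤ(α₁,α₂) = ℤ[α₁^{±1},α₂^{±1}]`, realised as the
group algebra of `ℤ²` over `ℤ`. -/
abbrev L2 := AddMonoidAlgebra ℤ (Fin 2 → ℤ)

/-- The monomial `α₁`. -/
def alpha1 : L2 := AddMonoidAlgebra.single ![1, 0] 1

/-- The monomial `α₂`. -/
def alpha2 : L2 := AddMonoidAlgebra.single ![0, 1] 1

/-- The ring of integral piecewise Laurent polynomials on the fan `Σ_{(1,1,2)}` of
`ℙ(1,1,2)`, as a subring of `S^±_ℤ(α₁,α₂)³`: triples `(f₀, f₁, f₂)` (component `fᵢ`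
attached to the maximal cone `σᵢ`) with `(1−α₁) ∣ f₀ − f₁`, `(1−α₂) ∣ f₀ − f₂` and
`(1−α₁²α₂^{−1}) ∣ f₁ − f₂`. -/
def PK112 : Subring (Fin 3 → L2) where
  carrier := {f | (1 - alpha1) ∣ f 0 - f 1 ∧ (1 - alpha2) ∣ f 0 - f 2 ∧
    (1 - AddMonoidAlgebra.single ![2, -1] 1) ∣ f 1 - f 2}
  zero_mem' := by refine ⟨?_, ?_, ?_⟩ <;> simp
  one_mem' := by refine ⟨?_, ?_, ?_⟩ <;> simp
  add_mem' := by
    rintro a b ⟨ha1, ha2, ha3⟩ ⟨hb1, hb2, hb3⟩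
    refine ⟨?_, ?_, ?_⟩
    · simpa [add_sub_add_comm] using dvd_add ha1 hb1
    · simpa [add_sub_add_comm] using dvd_add ha2 hb2
    · simpa [add_sub_add_comm] using dvd_add ha3 hb3
  neg_mem' := by
    rintro a ⟨h1, h2, h3⟩
    exact ⟨by simpa [neg_sub_neg, ← sub_eq_neg_add] using h1.neg_right,
      by simpa [neg_sub_neg, ← sub_eq_neg_add] using h2.neg_right,
      by simpa [neg_sub_neg, ← sub_eq_neg_add] using h3.neg_right⟩
  mul_mem' := by
    rintro a b ⟨ha1, ha2, ha3⟩ ⟨hb1, hb2, hb3⟩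
    have key : ∀ (i j : Fin 3) (d : L2),
        d ∣ a i - a j → d ∣ b i - b j → d ∣ a i * b i - a j * b j := by
      intro i j d h1 h2
      have e : a i * b i - a j * b j = (a i - a j) * b i + a j * (b i - b j) := by ring
      rw [e]
      exact dvd_add (h1.mul_right _) (h2.mul_left _)
    exact ⟨key 0 1 _ ha1 hb1, key 0 2 _ ha2 hb2, key 1 2 _ ha3 hb3⟩

/-- The piecewise Laurent polynomial `ε = (0, 1−α₁², 1−α₂)`. -/
def epsElt : Fin 3 → L2 := ![0, 1 - alpha1 ^ 2, 1 - alpha2]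

/-- The piecewise Laurent polynomial `ζ = (0, (1−α₁)(α₂−α₁²), 0)`. -/
def zetaElt : Fin 3 → L2 := ![0, (1 - alpha1) * (alpha2 - alpha1 ^ 2), 0]

lemma vadd2 (a b c d : ℤ) : (![a, b] + ![c, d] : Fin 2 → ℤ) = ![a + c, b + d] := by
  funext i; fin_cases i <;> simp

def projHom : (Fin 2 → ℤ) →+ (Fin 2 → ℤ) :=
  AddMonoidHom.mk' (fun v => ![0, v 1]) (by
    intro v w; funext i; fin_cases i <;> simp)

def e1 : L2 →+* L2 := AddMonoidAlgebra.mapDomainRingHom ℤ projHom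

lemma e1_single (a : Fin 2 → ℤ) (b : ℤ) :
    e1 (AddMonoidAlgebra.single a b) = AddMonoidAlgebra.single ![0, a 1] b := by
  simp [e1, AddMonoidAlgebra.mapDomainRingHom, projHom]

lemma e1_alpha1 : e1 alpha1 = 1 := by
  rw [alpha1, e1_single, AddMonoidAlgebra.one_def]
  congr 1
  funext i; fin_cases i <;> simp

lemma e1_alpha2 : e1 alpha2 = alpha2 := by
  rw [alpha2, e1_single]
  norm_num

lemma e1_idem (f : L2) : e1 (e1 f) = e1 f := by
  have step : ∀ x y : L2, e1 (e1 x) = e1 x → e1 (e1 y) = e1 y →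
      e1 (e1 (x + y)) = e1 (x + y) := by
    intro x y hx hy; simp only [map_add, hx, hy]
  have sing : ∀ (a : Fin 2 → ℤ) (b : ℤ),
      e1 (e1 (AddMonoidAlgebra.single a b : L2)) = e1 (AddMonoidAlgebra.single a b) := by
    intro a b
    rw [e1_single, e1_single]
    norm_num
  induction f using AddMonoidAlgebra.induction with
  | zero => simp
  | single_add a b f _ _ ih => exact step _ _ (sing a b) ih

lemma dvd_one_sub_un (n : ℤ) :
    (1 - alpha1) ∣ (1 - AddMonoidAlgebra.single ![n, 0] (1:ℤ) : L2) := by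
  induction n using Int.induction_on with
  | zero =>
      have : (![(0:ℤ), 0] : Fin 2 → ℤ) = 0 := by funext i; fin_cases i <;> simp
      rw [this, ← AddMonoidAlgebra.one_def]
      simp
  | succ n ih =>
      have hmul : (AddMonoidAlgebra.single ![(n:ℤ), 0] (1:ℤ) : L2) * alpha1
          = AddMonoidAlgebra.single ![(n:ℤ)+1, 0] 1 := by
        rw [alpha1, AddMonoidAlgebra.single_mul_single, vadd2]
        norm_num
      have key : (1 - AddMonoidAlgebra.single ![(n:ℤ)+1, 0] (1:ℤ) : L2)
          = (1 - AddMonoidAlgebra.single ![(n:ℤ), 0] 1)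
            + AddMonoidAlgebra.single ![(n:ℤ), 0] 1 * (1 - alpha1) := by
        rw [mul_sub, mul_one, hmul]; ring
      rw [key]
      exact dvd_add ih (Dvd.intro_left _ rfl)
  | pred n ih =>
      have hmul : (AddMonoidAlgebra.single ![-(n:ℤ)-1, 0] (1:ℤ) : L2) * alpha1
          = AddMonoidAlgebra.single ![-(n:ℤ), 0] 1 := by
        rw [alpha1, AddMonoidAlgebra.single_mul_single, vadd2]
        norm_num
      have key : (1 - AddMonoidAlgebra.single ![-(n:ℤ)-1, 0] (1:ℤ) : L2)
          = (1 - AddMonoidAlgebra.single ![-(n:ℤ), 0] 1)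
            - AddMonoidAlgebra.single ![-(n:ℤ)-1, 0] 1 * (1 - alpha1) := by
        rw [mul_sub, mul_one, hmul]; ring
      rw [key]
      exact dvd_sub ih (Dvd.intro_left _ rfl)

lemma dvd_sub_e1 (f : L2) : (1 - alpha1) ∣ f - e1 f := by
  have step : ∀ x y : L2, (1 - alpha1) ∣ x - e1 x → (1 - alpha1) ∣ y - e1 y →
      (1 - alpha1) ∣ (x + y) - e1 (x + y) := by
    intro x y hx hy
    have : (x + y) - e1 (x + y) = (x - e1 x) + (y - e1 y) := by rw [map_add]; ring
    rw [this]; exact dvd_add hx hy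
  have sing : ∀ (a : Fin 2 → ℤ) (b : ℤ),
      (1 - alpha1) ∣ (AddMonoidAlgebra.single a b : L2) - e1 (AddMonoidAlgebra.single a b) := by
    intro a b
    rw [e1_single]
    have hmul : (AddMonoidAlgebra.single ![0, a 1] b : L2)
        * AddMonoidAlgebra.single ![a 0, 0] 1 = AddMonoidAlgebra.single a b := by
      rw [AddMonoidAlgebra.single_mul_single, vadd2, mul_one]
      congr 1
      funext i; fin_cases i <;> simp
    have key : (AddMonoidAlgebra.single a b : L2) - AddMonoidAlgebra.single ![0, a 1] b
        = AddMonoidAlgebra.single ![0, a 1] b *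
          -(1 - AddMonoidAlgebra.single ![a 0, 0] 1) := by
      rw [mul_neg, mul_sub, mul_one, hmul]; ring
    rw [key]
    exact Dvd.dvd.mul_left ((dvd_one_sub_un (a 0)).neg_right) _
  induction f using AddMonoidAlgebra.induction with
  | zero => simp
  | single_add a b f _ _ ih => exact step _ _ (sing a b) ih

lemma single_ne (a b : Fin 2 → ℤ) (h : a ≠ b) :
    (AddMonoidAlgebra.single a (1:ℤ) : L2) ≠ AddMonoidAlgebra.single b 1 := by
  intro heq
  exact h (AddMonoidAlgebra.single_left_injective one_ne_zero heq)

lemma alpha1_sq : alpha1 ^ 2 = AddMonoidAlgebra.single ![2,0] 1 := by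
  rw [alpha1, AddMonoidAlgebra.single_pow]
  congr 1
  funext i; fin_cases i <;> simp

lemma one_sub_alpha2_ne : (1 : L2) - alpha2 ≠ 0 := by
  refine sub_ne_zero_of_ne ?_
  rw [AddMonoidAlgebra.one_def, alpha2]
  exact single_ne _ _ (by decide)

lemma one_sub_alpha1_ne : (1 : L2) - alpha1 ≠ 0 := by
  refine sub_ne_zero_of_ne ?_
  rw [AddMonoidAlgebra.one_def, alpha1]
  exact single_ne _ _ (by decide)

lemma a2_sub_a1sq_ne : alpha2 - alpha1 ^ 2 ≠ 0 := by
  refine sub_ne_zero_of_ne ?_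
  rw [alpha1_sq, alpha2]
  exact single_ne _ _ (by decide)

lemma alpha2_sub_one_ne : alpha2 - 1 ≠ 0 := by
  refine sub_ne_zero_of_ne ?_
  rw [AddMonoidAlgebra.one_def, alpha2]
  exact single_ne _ _ (by decide)

lemma coprime_div {h : L2} (h1 : (1 - alpha1) ∣ h) (h2 : (alpha2 - alpha1 ^ 2) ∣ h) :
    (1 - alpha1) * (alpha2 - alpha1 ^ 2) ∣ h := by
  obtain ⟨k, hk⟩ := h2
  have hk1 : (1 - alpha1) ∣ (alpha2 - alpha1 ^ 2) * e1 k := by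
    have key : (alpha2 - alpha1 ^ 2) * e1 k
        = h - (alpha2 - alpha1 ^ 2) * (k - e1 k) := by rw [hk]; ring
    rw [key]
    exact dvd_sub h1 ((dvd_sub_e1 k).mul_left _)
  obtain ⟨t, ht⟩ := hk1
  have ht2 := congrArg e1 ht
  rw [map_mul, map_mul, map_sub, map_sub, map_one, map_pow, e1_alpha1, e1_alpha2,
    e1_idem, one_pow] at ht2
  have hz : (alpha2 - 1) * e1 k = 0 := by
    rw [ht2]; ring
  have hek : e1 k = 0 := by
    rcases mul_eq_zero.mp hz with h' | h'
    · exact absurd h' alpha2_sub_one_ne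
    · exact h'
  have hk2 : (1 - alpha1) ∣ k := by
    have := dvd_sub_e1 k
    rwa [hek, sub_zero] at this
  obtain ⟨m, hm⟩ := hk2
  exact ⟨m, by rw [hk, hm]; ring⟩

lemma s_mul_alpha2 : (AddMonoidAlgebra.single ![2,-1] (1:ℤ) : L2) * alpha2 = alpha1 ^ 2 := by
  rw [alpha2, AddMonoidAlgebra.single_mul_single, vadd2, alpha1_sq]
  norm_num

lemma dvd_of_s_dvd {g : L2} (h : (1 - AddMonoidAlgebra.single ![2,-1] (1:ℤ)) ∣ g) :
    (alpha2 - alpha1 ^ 2) ∣ g := by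
  obtain ⟨q, hq⟩ := h
  refine ⟨AddMonoidAlgebra.single ![0,-1] 1 * q, ?_⟩
  have key : (alpha2 - alpha1 ^ 2) * (AddMonoidAlgebra.single ![0,-1] 1 * q)
      = ((alpha2 - alpha1 ^ 2) * AddMonoidAlgebra.single ![0,-1] 1) * q := by ring
  have key2 : (alpha2 - alpha1 ^ 2) * AddMonoidAlgebra.single ![0,-1] (1:ℤ)
      = 1 - AddMonoidAlgebra.single ![2,-1] 1 := by
    rw [sub_mul, alpha2, alpha1_sq, AddMonoidAlgebra.single_mul_single,
      AddMonoidAlgebra.single_mul_single, vadd2, vadd2, AddMonoidAlgebra.one_def]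
    norm_num
    congr 1
    funext i; fin_cases i <;> simp
  rw [key, key2, hq]


lemma one_sub_s_mul :
    (1 - AddMonoidAlgebra.single ![2,-1] (1:ℤ) : L2) * alpha2 = alpha2 - alpha1 ^ 2 := by
  rw [sub_mul, one_mul, s_mul_alpha2]

lemma epsElt_mem : epsElt ∈ PK112 := by
  refine ⟨⟨-(1+alpha1), ?_⟩, ⟨-1, ?_⟩, ⟨alpha2, ?_⟩⟩
  · show epsElt 0 - epsElt 1 = (1 - alpha1) * -(1 + alpha1)
    simp only [epsElt, Matrix.cons_val_zero, Matrix.cons_val_one, Matrix.head_cons]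
    ring
  · show epsElt 0 - epsElt 2 = (1 - alpha2) * -1
    simp only [epsElt, Matrix.cons_val_zero, Matrix.cons_val_two, Matrix.tail_cons,
      Matrix.head_cons]
    ring
  · show epsElt 1 - epsElt 2 = (1 - AddMonoidAlgebra.single ![2,-1] 1) * alpha2
    rw [one_sub_s_mul]
    simp only [epsElt, Matrix.cons_val_zero, Matrix.cons_val_one, Matrix.cons_val_two, Matrix.tail_cons,
      Matrix.head_cons]
    ring

lemma zetaElt_mem : zetaElt ∈ PK112 := by
  refine ⟨⟨-(alpha2 - alpha1 ^ 2), ?_⟩, ⟨0, ?_⟩, ⟨(1 - alpha1) * alpha2, ?_⟩⟩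
  · show zetaElt 0 - zetaElt 1 = (1 - alpha1) * -(alpha2 - alpha1 ^ 2)
    simp only [zetaElt, Matrix.cons_val_zero, Matrix.cons_val_one, Matrix.head_cons]
    ring
  · show zetaElt 0 - zetaElt 2 = (1 - alpha2) * 0
    simp only [zetaElt, Matrix.cons_val_zero, Matrix.cons_val_two, Matrix.tail_cons,
      Matrix.head_cons]
    ring
  · show zetaElt 1 - zetaElt 2
        = (1 - AddMonoidAlgebra.single ![2,-1] 1) * ((1 - alpha1) * alpha2)
    have : (1 - AddMonoidAlgebra.single ![2,-1] (1:ℤ) : L2) * ((1 - alpha1) * alpha2)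
        = (1 - alpha1) * ((1 - AddMonoidAlgebra.single ![2,-1] 1) * alpha2) := by ring
    rw [this, one_sub_s_mul]
    simp only [zetaElt, Matrix.cons_val_zero, Matrix.cons_val_one, Matrix.cons_val_two, Matrix.tail_cons,
      Matrix.head_cons]
    ring

def diagHom : L2 →+* PK112 :=
  (Pi.constRingHom (Fin 3) L2).codRestrict PK112
    (fun c => ⟨⟨0, by simp⟩, ⟨0, by simp⟩, ⟨0, by simp⟩⟩)

def epsPK : PK112 := ⟨epsElt, epsElt_mem⟩
def zetaPK : PK112 := ⟨zetaElt, zetaElt_mem⟩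

open MvPolynomial in
lemma reduceLin (p : MvPolynomial (Fin 2) L2) :
    ∃ a b d : L2, p - (C a + C b * X 0 + C d * X 1) ∈ Ideal.span
      ({X 0 * (X 0 + C alpha2 - 1) - (1 + C alpha1) * X 1,
        X 1 * (X 0 + C alpha1 ^ 2 - 1),
        X 1 * (X 1 - C ((1 - alpha1) * (alpha2 - alpha1 ^ 2)))} :
        Set (MvPolynomial (Fin 2) L2)) := by
  induction p using MvPolynomial.induction_on with
  | C c =>
      refine ⟨c, 0, 0, ?_⟩
      have : (C c : MvPolynomial (Fin 2) L2) - (C c + C 0 * X 0 + C 0 * X 1) = 0 := by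
        simp
      rw [this]; exact Ideal.zero_mem _
  | add p q hp hq =>
      obtain ⟨a, b, d, h⟩ := hp
      obtain ⟨a', b', d', h'⟩ := hq
      refine ⟨a + a', b + b', d + d', ?_⟩
      have key : (p + q) - (C (a + a') + C (b + b') * X 0 + C (d + d') * X 1)
          = (p - (C a + C b * X 0 + C d * X 1))
            + (q - (C a' + C b' * X 0 + C d' * X 1)) := by
        simp only [map_add]; ring
      rw [key]; exact Ideal.add_mem _ h h'
  | mul_X p i hp =>
      obtain ⟨a, b, d, h⟩ := hp
      fin_cases i
      · refine ⟨0, a + b * (1 - alpha2), b * (1 + alpha1) + d * (1 - alpha1 ^ 2), ?_⟩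
        show p * X 0 - (C 0 + C (a + b * (1 - alpha2)) * X 0
              + C (b * (1 + alpha1) + d * (1 - alpha1 ^ 2)) * X 1)
            ∈ Ideal.span {X 0 * (X 0 + C alpha2 - 1) - (1 + C alpha1) * X 1,
              X 1 * (X 0 + C alpha1 ^ 2 - 1),
              X 1 * (X 1 - C ((1 - alpha1) * (alpha2 - alpha1 ^ 2)))}
        have key : p * X 0 - (C 0 + C (a + b * (1 - alpha2)) * X 0
              + C (b * (1 + alpha1) + d * (1 - alpha1 ^ 2)) * X 1)
            = (p - (C a + C b * X 0 + C d * X 1)) * X 0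
              + C b * (X 0 * (X 0 + C alpha2 - 1) - (1 + C alpha1) * X 1)
              + C d * (X 1 * (X 0 + C alpha1 ^ 2 - 1)) := by
          simp only [map_add, map_mul, map_sub, map_one, map_pow, map_zero]; ring
        rw [key]
        exact Ideal.add_mem _ (Ideal.add_mem _ (Ideal.mul_mem_right _ _ h)
            (Ideal.mul_mem_left _ _ (Ideal.subset_span (by simp))))
          (Ideal.mul_mem_left _ _ (Ideal.subset_span (by simp)))
      · refine ⟨0, 0, a + b * (1 - alpha1 ^ 2)
            + d * ((1 - alpha1) * (alpha2 - alpha1 ^ 2)), ?_⟩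
        show p * X 1 - (C 0 + C 0 * X 0
              + C (a + b * (1 - alpha1 ^ 2)
                + d * ((1 - alpha1) * (alpha2 - alpha1 ^ 2))) * X 1)
            ∈ Ideal.span {X 0 * (X 0 + C alpha2 - 1) - (1 + C alpha1) * X 1,
              X 1 * (X 0 + C alpha1 ^ 2 - 1),
              X 1 * (X 1 - C ((1 - alpha1) * (alpha2 - alpha1 ^ 2)))}
        have key : p * X 1 - (C 0 + C 0 * X 0
              + C (a + b * (1 - alpha1 ^ 2)
                + d * ((1 - alpha1) * (alpha2 - alpha1 ^ 2))) * X 1)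
            = (p - (C a + C b * X 0 + C d * X 1)) * X 1
              + C b * (X 1 * (X 0 + C alpha1 ^ 2 - 1))
              + C d * (X 1 * (X 1 - C ((1 - alpha1) * (alpha2 - alpha1 ^ 2)))) := by
          simp only [map_add, map_mul, map_sub, map_one, map_pow, map_zero]; ring
        rw [key]
        exact Ideal.add_mem _ (Ideal.add_mem _ (Ideal.mul_mem_right _ _ h)
            (Ideal.mul_mem_left _ _ (Ideal.subset_span (by simp))))
          (Ideal.mul_mem_left _ _ (Ideal.subset_span (by simp)))


open MvPolynomial in
def phiPK : MvPolynomial (Fin 2) L2 →+* PK112 :=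
  eval₂Hom diagHom ![epsPK, zetaPK]

open MvPolynomial in
lemma phiPK_C (c : L2) : phiPK (C c) = diagHom c := eval₂Hom_C _ _ c

open MvPolynomial in
lemma phiPK_X0 : phiPK (X 0) = epsPK := by
  simp [phiPK]

open MvPolynomial in
lemma phiPK_X1 : phiPK (X 1) = zetaPK := by
  simp [phiPK]

lemma diagHom_coe (c : L2) : (diagHom c : Fin 3 → L2) = fun _ => c := rfl

set_option synthInstance.maxHeartbeats 1000000 in
set_option maxHeartbeats 1000000 in
open MvPolynomial in
lemma span_le_ker : Ideal.span
      ({X 0 * (X 0 + C alpha2 - 1) - (1 + C alpha1) * X 1,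
        X 1 * (X 0 + C alpha1 ^ 2 - 1),
        X 1 * (X 1 - C ((1 - alpha1) * (alpha2 - alpha1 ^ 2)))} :
        Set (MvPolynomial (Fin 2) L2)) ≤ RingHom.ker phiPK := by
  rw [Ideal.span_le]
  rintro x hx
  simp only [Set.mem_insert_iff, Set.mem_singleton_iff] at hx
  rw [SetLike.mem_coe, RingHom.mem_ker]
  rcases hx with rfl | rfl | rfl <;>
  · apply Subtype.ext
    funext i
    simp only [map_sub, map_mul, map_add, map_one, map_pow, phiPK_C, phiPK_X0, phiPK_X1]
    fin_cases i <;>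
      simp [epsPK, zetaPK, epsElt, zetaElt, diagHom_coe, Matrix.vecHead, Matrix.vecTail,
        -mul_eq_zero] <;>
      ring


set_option synthInstance.maxHeartbeats 1000000
set_option maxHeartbeats 1000000

open MvPolynomial in
/-- **Example 4.9, K-theory, ring presentation.**
`P_K(α)` for `Σ_{(1,1,2)}` is generated as a ring by the (diagonally embedded) global
elements `α₁^{±1}, α₂^{±1}` together with `ε` and `ζ`: the ring homomorphism from the
polynomial ring `S^±_ℤ(α₁,α₂)[E,Z]` (realised as `MvPolynomial (Fin 2) L2` with
`X 0 ↦ E`, `X 1 ↦ Z`) to `P_K(α)` sending every scalar `c ∈ S^±_ℤ(α₁,α₂)` to its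
diagonal image, `E ↦ ε` and `Z ↦ ζ`, is surjective with kernel the ideal
`I₂ = (E(E+α₂−1) − (1+α₁)Z, Z(E+α₁²−1), Z(Z−(1−α₁)(α₂−α₁²)))`,
so `P_K(α) ≅ S^±_ℤ(α₁,α₂)[E,Z]/I₂`. -/
theorem PK112_presentation :
    ∃ φ : MvPolynomial (Fin 2) L2 →+* PK112,
      (∀ c : L2, (φ (C c) : Fin 3 → L2) = fun _ => c) ∧
      ((φ (X 0) : Fin 3 → L2) = epsElt) ∧
      ((φ (X 1) : Fin 3 → L2) = zetaElt) ∧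
      Function.Surjective φ ∧
      RingHom.ker φ = Ideal.span
        {X 0 * (X 0 + C alpha2 - 1) - (1 + C alpha1) * X 1,
         X 1 * (X 0 + C alpha1 ^ 2 - 1),
         X 1 * (X 1 - C ((1 - alpha1) * (alpha2 - alpha1 ^ 2)))} := by
  refine ⟨phiPK, ?_, ?_, ?_, ?_, ?_⟩
  · intro c
    rw [phiPK_C]
    rfl
  · rw [phiPK_X0]
    rfl
  · rw [phiPK_X1]
    rfl
  · -- surjectivity
    rintro ⟨f, hf⟩
    obtain ⟨hf1, hf2, hf3⟩ := hf
    obtain ⟨c, hc⟩ := hf2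
    have hE : (1 - alpha1) ∣ f 1 - f 0 + c * (1 - alpha1 ^ 2) := by
      obtain ⟨u, hu⟩ := hf1
      exact ⟨-u + (1 + alpha1) * c, by linear_combination -hu⟩
    have hZ : (alpha2 - alpha1 ^ 2) ∣ f 1 - f 0 + c * (1 - alpha1 ^ 2) := by
      obtain ⟨v, hv⟩ := dvd_of_s_dvd hf3
      exact ⟨v + c, by linear_combination hv - hc⟩
    obtain ⟨d, hd⟩ := coprime_div hE hZ
    refine ⟨C (f 0) + C (-c) * X 0 + C d * X 1, ?_⟩
    apply Subtype.ext
    simp only [map_add, map_mul, phiPK_C, phiPK_X0, phiPK_X1]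
    funext i
    fin_cases i
    · simp [epsPK, zetaPK, epsElt, zetaElt, diagHom_coe, Matrix.vecHead, Matrix.vecTail,
        -mul_eq_zero]
    · simp [epsPK, zetaPK, epsElt, zetaElt, diagHom_coe, Matrix.vecHead, Matrix.vecTail,
        -mul_eq_zero]
      linear_combination -hd
    · simp [epsPK, zetaPK, epsElt, zetaElt, diagHom_coe, Matrix.vecHead, Matrix.vecTail,
        -mul_eq_zero]
      linear_combination hc
  · -- kernel
    refine le_antisymm ?_ span_le_ker
    intro p hp
    obtain ⟨a, b, d, hmem⟩ := reduceLin p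
    have hL : phiPK (C a + C b * X 0 + C d * X 1) = 0 := by
      have h2 : phiPK (p - (C a + C b * X 0 + C d * X 1)) = 0 := span_le_ker hmem
      have h3 : phiPK p = 0 := hp
      rw [map_sub, h3, zero_sub, neg_eq_zero] at h2
      exact h2
    have hcoe : ((phiPK (C a + C b * X 0 + C d * X 1) : PK112) : Fin 3 → L2) = 0 := by
      rw [hL]; rfl
    simp only [map_add, map_mul, phiPK_C, phiPK_X0, phiPK_X1] at hcoe
    have h0 := congrFun hcoe 0
    have h1 := congrFun hcoe 1
    have h2' := congrFun hcoe 2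
    simp [epsPK, zetaPK, epsElt, zetaElt, diagHom_coe, Matrix.vecHead, Matrix.vecTail,
      -mul_eq_zero] at h0 h1 h2'
    have ha : a = 0 := h0
    have hb : b = 0 := by
      rcases mul_eq_zero.mp (show b * (1 - alpha2) = 0 by
        linear_combination h2' - h0) with h | h
      · exact h
      · exact absurd h one_sub_alpha2_ne
    have hdz : d = 0 := by
      rcases mul_eq_zero.mp (show d * ((1 - alpha1) * (alpha2 - alpha1 ^ 2)) = 0 by
        linear_combination h1 - h0 - (1 - alpha1 ^ 2) * hb) with h | h
      · exact h
      · exact absurd h (mul_ne_zero one_sub_alpha1_ne a2_sub_a1sq_ne)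
    subst ha hb hdz
    simpa using hmem
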